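/- In a unital Jordan algebra, for idempotents e and f the following are equivalent: (i) e∘f = e, (ii) e ∈ U_f(A), (iii) U_e(A) ⊆ U_f(A). -/
import Mathlib

/-- The quadratic `U`-operator of a (linear) Jordan algebra: `U_a x = 2 a(ax) - a² x`. -/
def Uop {A : Type*} [NonAssocRing A] (a x : A) : A :=
  2 • (a * (a * x)) - (a * a) * x

section
variable {F A : Type*} [Field F] [NonAssocRing A] [Module F A]

lemma half (h2 : (2:F) ≠ 0) {x y : A} (h : x + x = y + y) : x = y := by
  have h' : (2:F) • x = (2:F) • y := by rw [two_smul, two_smul]; exact h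
  calc x = (2:F)⁻¹ • ((2:F) • x) := (inv_smul_smul₀ h2 x).symm
    _ = (2:F)⁻¹ • ((2:F) • y) := by rw [h']
    _ = y := inv_smul_smul₀ h2 y

lemma lin (h2 : (2:F) ≠ 0) (comm : ∀ a b : A, a * b = b * a)
    (jordan : ∀ a b : A, ((a * a) * b) * a = (a * a) * (b * a)) (a b c : A) :
    ((a*a)*b)*c + (((a*c)*b)*a + ((a*c)*b)*a)
      = (a*a)*(b*c) + ((a*c)*(b*a) + (a*c)*(b*a)) := by
  have hp := jordan (a+c) b
  have hm := jordan (a-c) b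
  have hc := jordan c b
  have key : (((a+c)*(a+c))*b)*(a+c) - (((a-c)*(a-c))*b)*(a-c)
      = ((a+c)*(a+c))*(b*(a+c)) - ((a-c)*(a-c))*(b*(a-c)) := by rw [hp, hm]
  simp only [add_mul, mul_add, sub_mul, mul_sub, comm c a] at key
  rw [hc] at key
  apply half (h2 := h2)
  rw [← sub_eq_zero] at key ⊢
  rw [← key]
  abel

lemma Uop_eq (a x : A) : Uop a x = a*(a*x) + a*(a*x) - (a*a)*x := by
  rw [Uop, two_nsmul]

lemma cubic (h2 : (2:F) ≠ 0) (comm : ∀ a b : A, a * b = b * a)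
    (jordan : ∀ a b : A, ((a * a) * b) * a = (a * a) * (b * a))
    (f : A) (hf : f * f = f) (x : A) :
    f*(f*(f*x)) + f*(f*(f*x)) = f*(f*x) + f*(f*x) + f*(f*x) - f*x := by
  have h := lin h2 comm jordan f f x
  rw [hf] at h
  rw [comm (f*x) f, comm (f*(f*x)) f] at h
  -- h : (f*f)*x + (f*(f*(f*x)) + f*(f*(f*x))) = f*(f*x) + (f*(f*x) + f*(f*x)) ??
  rw [hf] at h
  rw [← sub_eq_zero] at h ⊢
  rw [← h]; abel

/-- if `f` is idempotent then `f * Uop f x = Uop f x`. -/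
lemma mulUop (h2 : (2:F) ≠ 0) (comm : ∀ a b : A, a * b = b * a)
    (jordan : ∀ a b : A, ((a * a) * b) * a = (a * a) * (b * a))
    (f : A) (hf : f * f = f) (x : A) : f * Uop f x = Uop f x := by
  have hc := cubic h2 comm jordan f hf x
  rw [Uop_eq, hf, mul_sub, mul_add]
  rw [← sub_eq_zero] at hc ⊢
  rw [← hc]; abel

lemma fixUop (f : A) (hf : f * f = f) (y : A) (hy : f * y = y) : Uop f y = y := by
  rw [Uop_eq, hf, hy, hy]; abel

end

theorem idempotent_le_tfae {F A : Type*} [Field F]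
    [NonAssocRing A] [Module F A] (h2 : (2 : F) ≠ 0)
    (comm : ∀ a b : A, a * b = b * a)
    (jordan : ∀ a b : A, ((a * a) * b) * a = (a * a) * (b * a))
    (e f : A) (he : e * e = e) (hf : f * f = f) :
    (e * f = e ↔ e ∈ Set.range (Uop f)) ∧
      (e * f = e ↔ Set.range (Uop e) ⊆ Set.range (Uop f)) := by
  -- (i) → (ii)
  have dir12 : e * f = e → e ∈ Set.range (Uop f) := by
    intro hef
    exact ⟨e, fixUop f hf e (by rw [comm f e]; exact hef)⟩
  -- (ii) → (i)
  have dir21 : e ∈ Set.range (Uop f) → e * f = e := by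
    rintro ⟨x, hx⟩
    have h1 : f * e = e := by rw [← hx]; exact mulUop h2 comm jordan f hf x
    rw [comm e f]; exact h1
  -- (i) → (iii)
  have dir13 : e * f = e → Set.range (Uop e) ⊆ Set.range (Uop f) := by
    intro hef
    have hfe : f * e = e := by rw [comm f e]; exact hef
    set g : A := f - e with hg
    have heg : e * g = 0 := by rw [hg, mul_sub, hef, he, sub_self]
    have hge : g * e = 0 := by rw [hg, sub_mul, hfe, he, sub_self]
    -- commutation : (e*z)*g = e*(z*g)
    have comm2 : ∀ z : A, (e*z)*g = e*(z*g) := by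
      intro z
      have h := lin h2 comm jordan e z g
      simp only [he, heg, zero_mul, mul_zero, add_zero, zero_add] at h
      exact h
    -- key3 : ((e*x)*g)*e + ((e*x)*g)*e = e*(g*x)
    have key3 : ∀ x : A, ((e*x)*g)*e + ((e*x)*g)*e = e*(g*x) := by
      intro x
      have h := lin h2 comm jordan e g x
      simp only [he, heg, hge, zero_mul, mul_zero, add_zero, zero_add] at h
      exact h
    rintro y ⟨x, hx⟩
    -- show g * y = 0
    have hgy : g * y = 0 := by
      have h1 : g * (e*(e*x)) = e*((e*x)*g) := by
        rw [comm g (e*(e*x)), comm2 (e*x)]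
      have h2' : g * (e*x) = e*(g*x) := by
        rw [comm g (e*x), comm2 x, comm x g]
      have h3 := key3 x
      rw [comm ((e*x)*g) e] at h3
      rw [← hx, Uop_eq, he, mul_sub, mul_add, h1, h2', h3]
      abel
    have hey : e * y = y := by rw [← hx]; exact mulUop h2 comm jordan e he x
    have hfy : f * y = y := by
      have : f * y = e * y + g * y := by rw [hg, sub_mul]; abel
      rw [this, hgy, hey, add_zero]
    exact ⟨y, fixUop f hf y hfy⟩
  -- (iii) → (ii)
  have dir32 : Set.range (Uop e) ⊆ Set.range (Uop f) → e ∈ Set.range (Uop f) := by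
    intro hsub
    exact hsub ⟨e, fixUop e he e (by rw [he])⟩
  exact ⟨⟨dir12, dir21⟩, ⟨dir13, fun h => dir21 (dir32 h)⟩⟩
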